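/- Let Hsh be the shuffle algebra on words over {1,2} and define R : Hsh → Hsh on words by R(w) = w if the first letter of w is 1 and R(w) = 0 otherwise (R(∅) can be set to ∅, or 0, consistently with the decomposition), extended linearly. Then R is an idempotent operator and (Hsh, R) is a unital commutative Rota-Baxter algebra of weight -1: R(u)⧢R(v) = R(R(u)⧢v + u⧢R(v) - u⧢v) for all u, v ∈ Hsh. -/

import Mathlib

/-- The shuffle product of two words over `{1,2} ⊆ ℕ`, with values in formal
`ℤ`-linear combinations of words: `am ⧢ bn = a(m ⧢ bn) + b(am ⧢ n)`. -/
noncomputable def sh : List ℕ → List ℕ → (List ℕ →₀ ℤ)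
  | [], w => Finsupp.single w 1
  | a :: m, [] => Finsupp.single (a :: m) 1
  | a :: m, b :: n =>
      (sh m (b :: n)).mapDomain (a :: ·) + (sh (a :: m) n).mapDomain (b :: ·)
  termination_by u v => u.length + v.length

/-- Bilinear extension of the shuffle product to `Hsh`, the span of words. -/
noncomputable def shMul (f g : List ℕ →₀ ℤ) : List ℕ →₀ ℤ :=
  f.sum fun u cu => g.sum fun v cv => (cu * cv) • sh u v

/-- The linear projection onto the span of words whose first letter is `1`
(words not starting with `1`, including the empty word, are sent to `0`). -/
noncomputable def RF (f : List ℕ →₀ ℤ) : List ℕ →₀ ℤ :=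
  f.filter fun w => w.head? = some 1

theorem sh_comm : ∀ u v : List ℕ, sh u v = sh v u
  | [], [] => rfl
  | [], _ :: _ => by rw [sh, sh]
  | _ :: _, [] => by rw [sh, sh]
  | a :: m, b :: n => by
      rw [sh, sh, sh_comm m (b :: n), sh_comm (a :: m) n, add_comm]
  termination_by u v => u.length + v.length

theorem sh_head : ∀ u v w : List ℕ, (sh u v) w ≠ 0 →
    w.head? = u.head? ∨ w.head? = v.head?
  | [], v, w, h => by
      rw [sh, Finsupp.single_apply] at h
      right
      split at h
      · subst ‹v = w›; rfl
      · exact absurd rfl h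
  | a :: m, [], w, h => by
      rw [sh, Finsupp.single_apply] at h
      left
      split at h
      · subst ‹a :: m = w›; rfl
      · exact absurd rfl h
  | a :: m, b :: n, w, h => by
      rw [sh, Finsupp.add_apply] at h
      rcases (by omega : ((sh m (b :: n)).mapDomain (a :: ·)) w ≠ 0 ∨
          ((sh (a :: m) n).mapDomain (b :: ·)) w ≠ 0) with h1 | h1
      · have hw : w ∈ ((sh m (b :: n)).mapDomain (a :: ·)).support :=
          Finsupp.mem_support_iff.2 h1
        classical
        obtain ⟨x, -, rfl⟩ := Finset.mem_image.1 (Finsupp.mapDomain_support hw)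
        exact Or.inl rfl
      · have hw : w ∈ ((sh (a :: m) n).mapDomain (b :: ·)).support :=
          Finsupp.mem_support_iff.2 h1
        classical
        obtain ⟨x, -, rfl⟩ := Finset.mem_image.1 (Finsupp.mapDomain_support hw)
        exact Or.inr rfl

theorem filter_sh_both {u v : List ℕ} (hu : u.head? = some 1) (hv : v.head? = some 1) :
    (sh u v).filter (fun w => w.head? = some 1) = sh u v := by
  ext w
  rw [Finsupp.filter_apply]
  split
  · rfl
  · rename_i hw
    by_contra h
    rcases sh_head u v w (fun h0 => h h0.symm) with h1 | h1 <;>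
      exact hw (by rw [h1]; assumption)

theorem filter_sh_none {u v : List ℕ} (hu : ¬ u.head? = some 1) (hv : ¬ v.head? = some 1) :
    (sh u v).filter (fun w => w.head? = some 1) = 0 := by
  ext w
  rw [Finsupp.filter_apply]
  split
  · rename_i hw
    by_contra h
    rcases sh_head u v w h with h1 | h1
    · exact hu (h1 ▸ hw)
    · exact hv (h1 ▸ hw)
  · rfl

theorem filter_sum' {M : Type*} [AddCommMonoid M] (p : List ℕ → Prop) [DecidablePred p]
    (f : List ℕ →₀ ℤ) (h : List ℕ → ℤ → M) :
    (f.filter p).sum h = f.sum fun a b => if p a then h a b else 0 := by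
  rw [Finsupp.sum, Finsupp.sum, Finsupp.support_filter, Finset.sum_filter]
  refine Finset.sum_congr rfl fun x _ => ?_
  by_cases hp : p x <;> simp [hp, Finsupp.filter_apply]

theorem filter_fsum {ι M : Type*} [Zero M] (p : List ℕ → Prop) [DecidablePred p]
    (f : ι →₀ M) (g : ι → M → (List ℕ →₀ ℤ)) :
    (f.sum g).filter p = f.sum fun a b => (g a b).filter p :=
  map_finsuppSum (Finsupp.filterAddHom p) f g

/-- `R` is idempotent and `(Hsh, R)` is a unital commutative
Rota-Baxter algebra of weight `-1`:
`R(u)⧢R(v) = R(R(u)⧢v + u⧢R(v) - u⧢v)`. -/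
theorem shuffle_RF_rota_baxter :
    (∀ f, RF (RF f) = RF f) ∧
    (∀ f g, shMul f g = shMul g f) ∧
    (∀ f, shMul (Finsupp.single [] 1) f = f) ∧
    (∀ f g : List ℕ →₀ ℤ,
      shMul (RF f) (RF g) = RF (shMul (RF f) g + shMul f (RF g) - shMul f g)) := by
  refine ⟨?_, ?_, ?_, ?_⟩
  · intro f
    ext w
    simp only [RF, Finsupp.filter_apply]
    split <;> simp_all
  · intro f g
    rw [shMul, shMul, Finsupp.sum_comm]
    refine Finsupp.sum_congr fun v _ => Finsupp.sum_congr fun u _ => ?_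
    rw [sh_comm, mul_comm]
  · intro f
    rw [shMul, Finsupp.sum_single_index]
    · calc f.sum (fun v cv => (1 * cv) • sh [] v)
          = f.sum fun v cv => Finsupp.single v cv := by
            refine Finsupp.sum_congr fun v _ => ?_
            rw [sh, one_mul, Finsupp.smul_single, smul_eq_mul, mul_one]
        _ = f := Finsupp.sum_single f
    · simp
  · intro f g
    simp only [shMul, RF]
    rw [Finsupp.filter_sub, Finsupp.filter_add]
    -- rewrite each of the four pieces as a double sum over `f` and `g`
    have e0 : (f.filter fun w => w.head? = some 1).sum
        (fun u cu => (g.filter fun w => w.head? = some 1).sum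
          fun v cv => (cu * cv) • sh u v) =
        f.sum fun u cu => g.sum fun v cv =>
          if u.head? = some 1 then (if v.head? = some 1 then (cu * cv) • sh u v else 0)
          else 0 := by
      rw [filter_sum']
      refine Finsupp.sum_congr fun u _ => ?_
      rw [filter_sum']
      by_cases hu : u.head? = some 1
      · simp only [if_pos hu]
      · simp only [if_neg hu, Finsupp.sum_fun_zero]
    have e1 : ((f.filter fun w => w.head? = some 1).sum
          (fun u cu => g.sum fun v cv => (cu * cv) • sh u v)).filter
          (fun w => w.head? = some 1) =
        f.sum fun u cu => g.sum fun v cv =>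
          if u.head? = some 1 then (cu * cv) • (sh u v).filter (fun w => w.head? = some 1)
          else 0 := by
      rw [filter_sum', filter_fsum]
      refine Finsupp.sum_congr fun u _ => ?_
      by_cases hu : u.head? = some 1
      · simp only [if_pos hu]
        rw [filter_fsum]
        exact Finsupp.sum_congr fun v _ => Finsupp.filter_smul
      · simp only [if_neg hu, Finsupp.filter_zero, Finsupp.sum_fun_zero]
    have e2 : (f.sum
          (fun u cu => (g.filter fun w => w.head? = some 1).sum
            fun v cv => (cu * cv) • sh u v)).filter
          (fun w => w.head? = some 1) =
        f.sum fun u cu => g.sum fun v cv =>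
          if v.head? = some 1 then (cu * cv) • (sh u v).filter (fun w => w.head? = some 1)
          else 0 := by
      rw [filter_fsum]
      refine Finsupp.sum_congr fun u _ => ?_
      rw [filter_sum', filter_fsum]
      refine Finsupp.sum_congr fun v _ => ?_
      by_cases hv : v.head? = some 1
      · simp only [if_pos hv]
        exact Finsupp.filter_smul
      · simp only [if_neg hv, Finsupp.filter_zero]
    have e3 : (f.sum (fun u cu => g.sum fun v cv => (cu * cv) • sh u v)).filter
          (fun w => w.head? = some 1) =
        f.sum fun u cu => g.sum fun v cv =>
          (cu * cv) • (sh u v).filter (fun w => w.head? = some 1) := by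
      rw [filter_fsum]
      refine Finsupp.sum_congr fun u _ => ?_
      rw [filter_fsum]
      exact Finsupp.sum_congr fun v _ => Finsupp.filter_smul
    rw [e0, e1, e2, e3, ← Finsupp.sum_add, ← Finsupp.sum_sub]
    refine Finsupp.sum_congr fun u _ => ?_
    rw [← Finsupp.sum_add, ← Finsupp.sum_sub]
    refine Finsupp.sum_congr fun v _ => ?_
    by_cases hu : u.head? = some 1 <;> by_cases hv : v.head? = some 1
    · simp only [if_pos hu, if_pos hv, filter_sh_both hu hv]
      abel
    · simp only [if_pos hu, if_neg hv]
      abel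
    · simp only [if_neg hu, if_pos hv]
      abel
    · simp only [if_neg hu, if_neg hv, filter_sh_none hu hv, smul_zero]
      simp
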